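/- Let $x \in L_1(0,1)$, $E = \bigcup_{j\ge 0}(2^{-2j-1},2^{-2j})$, and $f_1 = \sum_{n=0}^{\infty}(-1)^{n+1}\mu(2^{-n-1};x) h_{n,1}$ with $h_{n,1} = \chi_{(0,2^{-n-1})} - \chi_{(2^{-n-1},2^{-n})}$. Then $(Tf_1)\chi_E \ge \frac{1}{2\log 2}\chi_E \cdot \sigma_{1/2} C^*\mu(x)$ almost everywhere, where $T$ is the martingale transform $Tf = \sum_{m\text{ even}}(\mathbb{E}_m f - \mathbb{E}_{m-1} f)$, $(C^*y)(t) = \int_t^1 \frac{y(s)}{s}ds$, and $(\sigma_{1/2}y)(t) = y(2t)\chi_{[0,1]}(2t)$. -/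

import Mathlib

open MeasureTheory Set Filter
open scoped ENNReal NNReal Topology

noncomputable section

def m01 : Measure ℝ := volume.restrict (Ioo (0:ℝ) 1)

def rearr (x : ℝ → ℝ) (t : ℝ) : ℝ :=
  sInf {s : ℝ | 0 ≤ s ∧ m01 {u | s < |x u|} ≤ ENNReal.ofReal t}

def dil (s : ℝ) (y : ℝ → ℝ) (t : ℝ) : ℝ :=
  if t / s ∈ Icc (0:ℝ) 1 then y (t / s) else 0

def In (n : ℕ) : Set ℝ := Ioo (((2:ℝ)^(n+1))⁻¹) (((2:ℝ)^n)⁻¹)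

def Jn (n : ℕ) : Set ℝ := Ioo 0 (((2:ℝ)^n)⁻¹)

def haarH (n : ℕ) : ℝ → ℝ := fun t => indicator (Jn (n+1)) 1 t - indicator (In n) 1 t

def Eset : Set ℝ := ⋃ j : ℕ, In (2*j)

def hardyC (y : ℝ → ℝ) (t : ℝ) : ℝ := (1/t) * ∫ s in Ioo (0:ℝ) t, y s

def hardyCstar (y : ℝ → ℝ) (t : ℝ) : ℝ := ∫ s in Ioo t 1, y s / s

def calderon (y : ℝ → ℝ) (t : ℝ) : ℝ := hardyC y t + hardyCstar y t

def dyadicSA (m : ℕ) : MeasurableSpace ℝ :=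
  MeasurableSpace.generateFrom
    {A | ∃ j : ℕ, 1 ≤ j ∧ j ≤ 2^m ∧ A = Ioo ((j-1 : ℝ)/2^m) ((j:ℝ)/2^m)}

def condE (m : ℕ) (f : ℝ → ℝ) : ℝ → ℝ := m01[f | dyadicSA m]

def condEprev (m : ℕ) (f : ℝ → ℝ) : ℝ → ℝ := if m = 0 then 0 else condE (m-1) f

def Tmart (f : ℝ → ℝ) : ℝ → ℝ :=
  fun t => ∑' m : ℕ, if Even m then condE m f t - condEprev m f t else 0

def Teps (f : ℝ → ℝ) : ℝ → ℝ :=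
  fun t => ∑' m : ℕ, (-1:ℝ)^m * (condE m f t - condEprev m f t)

/-! ### auxiliary lemmas -/

lemma m01_finite : m01 univ ≤ 1 := by
  rw [m01, Measure.restrict_apply_univ, Real.volume_Ioo]
  simp

instance : IsFiniteMeasure m01 :=
  ⟨lt_of_le_of_lt m01_finite (by norm_num)⟩

lemma tp_pos (n : ℕ) : (0:ℝ) < ((2:ℝ)^n)⁻¹ := by positivity

lemma tp_le_one (n : ℕ) : ((2:ℝ)^n)⁻¹ ≤ 1 := by
  rw [inv_le_one_iff₀]; right; exact one_le_pow₀ (by norm_num)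

lemma tp_anti {n m : ℕ} (h : n ≤ m) : ((2:ℝ)^m)⁻¹ ≤ ((2:ℝ)^n)⁻¹ := by
  apply inv_anti₀ (by positivity)
  exact pow_le_pow_right₀ (by norm_num) h

/-- the set defining `rearr` is nonempty for `t > 0` -/
lemma rearr_set_nonempty (x : ℝ → ℝ) (hx : Integrable x m01) {t : ℝ} (ht : 0 < t) :
    {s : ℝ | 0 ≤ s ∧ m01 {u | s < |x u|} ≤ ENNReal.ofReal t}.Nonempty := by
  set L : ℝ≥0∞ := ∫⁻ u, ‖x u‖₊ ∂m01 with hL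
  have hLfin : L ≠ ∞ := hx.2.ne
  set s₀ : ℝ := (L / ENNReal.ofReal t).toReal + 1 with hs₀
  have hs₀pos : 0 < s₀ := by positivity
  refine ⟨s₀, le_of_lt hs₀pos, ?_⟩
  have h1 : {u : ℝ | s₀ < |x u|} ⊆ {u : ℝ | ENNReal.ofReal s₀ ≤ (‖x u‖₊ : ℝ≥0∞)} := by
    intro u hu
    simp only [mem_setOf_eq] at hu ⊢
    rw [← enorm_eq_nnnorm, ← ofReal_norm]
    exact ENNReal.ofReal_le_ofReal (by rw [Real.norm_eq_abs]; exact hu.le)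
  refine le_trans (measure_mono h1) ?_
  refine le_trans (meas_ge_le_lintegral_div (hx.aestronglyMeasurable.aemeasurable.nnnorm.coe_nnreal_ennreal) (by simp [ENNReal.ofReal_eq_zero]; linarith) ENNReal.ofReal_ne_top) ?_
  have hs0ne : ENNReal.ofReal s₀ ≠ 0 := by simp only [ne_eq, ENNReal.ofReal_eq_zero, not_le]; linarith
  rw [ENNReal.div_le_iff_le_mul (Or.inl hs0ne) (Or.inl ENNReal.ofReal_ne_top)]
  -- L ≤ ofReal t * ofReal s₀
  have h2 : L / ENNReal.ofReal t ≤ ENNReal.ofReal ((L / ENNReal.ofReal t).toReal) := by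
    rw [ENNReal.ofReal_toReal]
    exact (ENNReal.div_lt_top hLfin (by simp only [ne_eq, ENNReal.ofReal_eq_zero, not_le]; linarith)).ne
  have h3 : ENNReal.ofReal ((L / ENNReal.ofReal t).toReal) ≤ ENNReal.ofReal s₀ := by
    apply ENNReal.ofReal_le_ofReal; rw [hs₀]; linarith
  calc L = (L / ENNReal.ofReal t) * ENNReal.ofReal t := by
            rw [ENNReal.div_mul_cancel (by simp [ENNReal.ofReal_eq_zero]; linarith) ENNReal.ofReal_ne_top]
    _ ≤ ENNReal.ofReal s₀ * ENNReal.ofReal t := by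
            exact mul_le_mul_left (le_trans h2 h3) _
    _ = ENNReal.ofReal t * ENNReal.ofReal s₀ := mul_comm _ _

lemma rearr_nonneg (x : ℝ → ℝ) (t : ℝ) : 0 ≤ rearr x t := by
  rw [rearr]
  apply Real.sInf_nonneg
  rintro s ⟨hs, -⟩; exact hs

lemma rearr_antitoneOn (x : ℝ → ℝ) (hx : Integrable x m01) :
    AntitoneOn (rearr x) (Ioi 0) := by
  intro t₁ ht₁ t₂ _ h12
  rw [rearr, rearr]
  apply csInf_le_csInf ⟨0, fun s hs => hs.1⟩ (rearr_set_nonempty x hx ht₁)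
  rintro s ⟨hs0, hs⟩
  exact ⟨hs0, le_trans hs (ENNReal.ofReal_le_ofReal h12)⟩

/-- distribution bound: the distribution of `rearr x` is dominated by that of `x` -/
lemma rearr_distrib_le (x : ℝ → ℝ) {s : ℝ} (hs : 0 ≤ s) :
    m01 {a : ℝ | s < rearr x a} ≤ m01 {u | s < |x u|} := by
  set d := m01 {u | s < |x u|} with hd
  rcases eq_or_ne d ∞ with h | h
  · rw [h]; exact le_top
  · have hsub : {a : ℝ | s < rearr x a} ∩ Ioo 0 1 ⊆ Ioo 0 d.toReal := by
      rintro a ⟨ha, ha01⟩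
      simp only [mem_setOf_eq] at ha
      constructor
      · exact ha01.1
      · -- if d ≤ ofReal a then s would be in the set, so rearr x a ≤ s
        by_contra hcon
        push_neg at hcon
        have : d ≤ ENNReal.ofReal a := by
          calc d ≤ ENNReal.ofReal d.toReal := by rw [ENNReal.ofReal_toReal h]
            _ ≤ ENNReal.ofReal a := ENNReal.ofReal_le_ofReal hcon
        have hmem : s ∈ {s' : ℝ | 0 ≤ s' ∧ m01 {u | s' < |x u|} ≤ ENNReal.ofReal a} := ⟨hs, this⟩
        have : rearr x a ≤ s := csInf_le ⟨0, fun s' hs' => hs'.1⟩ hmem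
        linarith
    calc m01 {a : ℝ | s < rearr x a} = volume ({a : ℝ | s < rearr x a} ∩ Ioo 0 1) := by
          rw [m01, Measure.restrict_apply' measurableSet_Ioo]
      _ ≤ volume (Ioo 0 d.toReal) := measure_mono hsub
      _ ≤ d := by rw [Real.volume_Ioo]; exact ENNReal.ofReal_le_of_le_toReal (by simp)

/-- the rearrangement is integrable (in the lintegral sense) -/
lemma lintegral_rearr_le (x : ℝ → ℝ) (hx : Integrable x m01) :
    ∫⁻ a, ENNReal.ofReal (rearr x a) ∂m01 ≤ ∫⁻ u, ‖x u‖₊ ∂m01 := by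
  have hmble : AEMeasurable (rearr x) m01 := by
    rw [m01]
    exact aemeasurable_restrict_of_antitoneOn measurableSet_Ioo
      ((rearr_antitoneOn x hx).mono (fun a ha => ha.1))
  rw [lintegral_eq_lintegral_meas_lt m01 (Eventually.of_forall (rearr_nonneg x)) hmble]
  have habs : AEMeasurable (fun u => |x u|) m01 := (by simpa [Real.norm_eq_abs] using hx.aestronglyMeasurable.norm.aemeasurable : AEMeasurable (fun u => |x u|) m01)
  have h2 : ∫⁻ u, ‖x u‖₊ ∂m01 = ∫⁻ u, ENNReal.ofReal (|x u|) ∂m01 := by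
    apply lintegral_congr; intro u
    rw [← enorm_eq_nnnorm, ← ofReal_norm, Real.norm_eq_abs]
  rw [h2, lintegral_eq_lintegral_meas_lt m01 (Eventually.of_forall (fun u => abs_nonneg (x u))) habs]
  apply lintegral_mono_ae
  filter_upwards [ae_restrict_mem measurableSet_Ioi] with t ht
  exact rearr_distrib_le x (le_of_lt ht)

/-! ### haar function lemmas -/

section haarstuff

lemma haar_zero_of_nonpos {n : ℕ} {u : ℝ} (h : u ≤ 0) : haarH n u = 0 := by
  rw [haarH, Jn, In, indicator_of_notMem, indicator_of_notMem, sub_zero]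
  · rintro ⟨h1, -⟩; have := tp_pos (n+1); linarith
  · rintro ⟨h1, -⟩; linarith

lemma haar_zero_of_le {n : ℕ} {u : ℝ} (h : ((2:ℝ)^n)⁻¹ ≤ u) : haarH n u = 0 := by
  rw [haarH, Jn, In, indicator_of_notMem, indicator_of_notMem, sub_zero]
  · rintro ⟨-, h2⟩
    exact absurd (lt_of_lt_of_le h2 h) (lt_irrefl u)
  · rintro ⟨-, h2⟩
    have := tp_anti (n := n) (m := n+1) (by omega)
    linarith

lemma haar_one {n : ℕ} {u : ℝ} (h1 : 0 < u) (h2 : u < ((2:ℝ)^(n+1))⁻¹) : haarH n u = 1 := by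
  rw [haarH, indicator_of_mem (show u ∈ Jn (n+1) from ⟨h1, h2⟩), indicator_of_notMem]
  · simp
  · rintro ⟨h3, -⟩
    have := tp_anti (n := n) (m := n+1) (by omega)
    linarith

lemma haar_neg_one {n : ℕ} {u : ℝ} (h : u ∈ In n) : haarH n u = -1 := by
  rw [haarH, indicator_of_notMem, indicator_of_mem h]
  · simp
  · rintro ⟨-, h2⟩
    obtain ⟨hh, -⟩ := h
    linarith

/-- value of haar on the interval `In k` -/
lemma haar_on_In {n k : ℕ} {u : ℝ} (h : u ∈ In k) :
    haarH n u = if n < k then 1 else if n = k then -1 else 0 := by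
  obtain ⟨h1, h2⟩ := h
  rcases lt_trichotomy n k with hnk | hnk | hnk
  · rw [if_pos hnk]
    exact haar_one (lt_trans (tp_pos _) h1) (lt_of_lt_of_le h2 (tp_anti hnk))
  · subst hnk
    rw [if_neg (lt_irrefl n), if_pos rfl]
    exact haar_neg_one ⟨h1, h2⟩
  · rw [if_neg (by omega), if_neg (by omega)]
    exact haar_zero_of_le (le_trans (tp_anti hnk) (le_of_lt h1))

lemma haar_measurable (n : ℕ) : Measurable (haarH n) := by
  apply Measurable.sub
  · exact (measurable_const.indicator measurableSet_Ioo)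
  · exact (measurable_const.indicator measurableSet_Ioo)

lemma haar_abs_le (n : ℕ) (u : ℝ) : |haarH n u| ≤ indicator (Jn n) 1 u := by
  rcases le_or_gt u 0 with h | h
  · rw [haar_zero_of_nonpos h, abs_zero]
    exact indicator_nonneg (fun _ _ => zero_le_one) u
  rcases le_or_gt (((2:ℝ)^n)⁻¹) u with h2 | h2
  · rw [haar_zero_of_le h2, abs_zero]
    exact indicator_nonneg (fun _ _ => zero_le_one) u
  · have hmem : u ∈ Jn n := ⟨h, h2⟩
    rw [indicator_of_mem hmem]
    simp only [Pi.one_apply]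
    rcases lt_or_ge u (((2:ℝ)^(n+1))⁻¹) with h3 | h3
    · rw [haar_one h h3]; simp
    · rcases eq_or_lt_of_le h3 with h4 | h4
      · rw [haarH, indicator_of_notMem (by rw [Jn]; rintro ⟨-, hh⟩; rw [← h4] at hh; exact lt_irrefl _ hh),
          indicator_of_notMem (by rw [In]; rintro ⟨hh, -⟩; rw [← h4] at hh; exact lt_irrefl _ hh)]
        simp
      · rw [haar_neg_one ⟨h4, h2⟩]; simp

/-! ### the function f1 and its partial sums -/

variable (x : ℝ → ℝ)

/-- coefficient -/
def an (n : ℕ) : ℝ := rearr x (((2:ℝ)^(n+1))⁻¹)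

lemma an_nonneg (n : ℕ) : 0 ≤ an x n := rearr_nonneg x _

/-- the summands of `f1` -/
def Fn (n : ℕ) : ℝ → ℝ := fun u => (-1:ℝ)^(n+1) * an x n * haarH n u

/-- the function appearing in the theorem -/
def f1 : ℝ → ℝ := fun u => ∑' n : ℕ, Fn x n u

lemma Fn_measurable (n : ℕ) : Measurable (Fn x n) :=
  (haar_measurable n).const_mul _

lemma Fn_abs_le (n : ℕ) (u : ℝ) : |Fn x n u| ≤ an x n * indicator (Jn n) 1 u := by
  rw [Fn, abs_mul, abs_mul, abs_pow, abs_neg, abs_one, one_pow, one_mul]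
  rw [abs_of_nonneg (an_nonneg x n)]
  exact mul_le_mul_of_nonneg_left (haar_abs_le n u) (an_nonneg x n)

/-- eventual vanishing of the summands -/
lemma Fn_event_zero (u : ℝ) : ∃ N : ℕ, ∀ n, N ≤ n → Fn x n u = 0 := by
  rcases le_or_gt u 0 with h | h
  · exact ⟨0, fun n _ => by rw [Fn, haar_zero_of_nonpos h, mul_zero]⟩
  · obtain ⟨N, hN⟩ := exists_pow_lt_of_lt_one h (by norm_num : (1:ℝ)/2 < 1)
    refine ⟨N, fun n hn => ?_⟩
    rw [Fn, haar_zero_of_le ?_, mul_zero]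
    have : ((1:ℝ)/2)^N = ((2:ℝ)^N)⁻¹ := by rw [one_div, inv_pow]
    rw [this] at hN
    exact le_trans (tp_anti hn) (le_of_lt hN)

lemma f1_eq_sum {u : ℝ} {N : ℕ} (h : ∀ n, N ≤ n → Fn x n u = 0) :
    f1 x u = ∑ n ∈ Finset.range N, Fn x n u := by
  rw [f1]
  exact tsum_eq_sum (fun n hn => h n (by simpa using hn))

lemma f1_measurable : Measurable (f1 x) := by
  apply measurable_of_tendsto_metrizable
    (f := fun N => fun u => ∑ n ∈ Finset.range N, Fn x n u)
  · intro N
    exact Finset.measurable_sum _ (fun n _ => Fn_measurable x n)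
  · rw [tendsto_pi_nhds]
    intro u
    obtain ⟨N, hN⟩ := Fn_event_zero x u
    rw [f1_eq_sum x hN]
    apply tendsto_atTop_of_eventually_const (i₀ := N)
    intro M hM
    rw [Finset.sum_subset (Finset.range_subset_range.2 hM)]
    intro n _ hn
    exact hN n (by simpa using hn)

lemma m01_Jn_le (n : ℕ) : m01 (Ioo 0 (((2:ℝ)^n)⁻¹)) ≤ ENNReal.ofReal (((2:ℝ)^n)⁻¹) := by
  rw [m01, Measure.restrict_apply' measurableSet_Ioo]
  refine le_trans (measure_mono (inter_subset_left)) ?_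
  rw [Real.volume_Ioo, sub_zero]

lemma lintegral_Fn_le (n : ℕ) :
    ∫⁻ u, ‖Fn x n u‖₊ ∂m01 ≤ ENNReal.ofReal (an x n) * ENNReal.ofReal (((2:ℝ)^n)⁻¹) := by
  have h1 : ∀ u, (‖Fn x n u‖₊ : ℝ≥0∞) ≤ ENNReal.ofReal (an x n) * indicator (Jn n) 1 u := by
    intro u
    rw [← enorm_eq_nnnorm, ← ofReal_norm, Real.norm_eq_abs]
    rcases em (u ∈ Jn n) with h | h
    · rw [indicator_of_mem h]
      simp only [Pi.one_apply, mul_one]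
      apply ENNReal.ofReal_le_ofReal
      have := Fn_abs_le x n u
      rw [indicator_of_mem h] at this
      simpa using this
    · rw [indicator_of_notMem h, mul_zero]
      have := Fn_abs_le x n u
      rw [indicator_of_notMem h, mul_zero] at this
      simp [le_antisymm this (abs_nonneg _)]
  calc ∫⁻ u, ‖Fn x n u‖₊ ∂m01 ≤ ∫⁻ u, ENNReal.ofReal (an x n) * indicator (Jn n) 1 u ∂m01 :=
        lintegral_mono h1
    _ = ENNReal.ofReal (an x n) * ∫⁻ u, indicator (Jn n) 1 u ∂m01 := lintegral_const_mul _ (by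
        exact measurable_one.indicator measurableSet_Ioo)
    _ ≤ ENNReal.ofReal (an x n) * ENNReal.ofReal (((2:ℝ)^n)⁻¹) := by
        apply mul_le_mul_right
        rw [Jn, lintegral_indicator measurableSet_Ioo]
        simp only [Pi.one_apply]
        rw [setLIntegral_one]
        exact m01_Jn_le n

end haarstuff
/-! ### summability and integrability of f1 -/

section integrability

variable (x : ℝ → ℝ) (hx : Integrable x m01)

lemma In_disjoint : Pairwise (Function.onFun Disjoint (fun n : ℕ => In (n+1))) := by
  intro a b hab
  wlog h : a < b generalizing a b
  · exact (this hab.symm (by omega)).symm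
  simp only [Function.onFun]
  rw [Set.disjoint_left]
  rintro u ⟨ha1, -⟩ ⟨-, hb2⟩
  have : ((2:ℝ)^(b+1))⁻¹ ≤ ((2:ℝ)^(a+1+1))⁻¹ := tp_anti (by omega)
  linarith

lemma In_measurable (n : ℕ) : MeasurableSet (In n) := measurableSet_Ioo

lemma m01_In (n : ℕ) : m01 (In n) = ENNReal.ofReal (((2:ℝ)^(n+1))⁻¹) := by
  have hsub : In n ⊆ Ioo (0:ℝ) 1 := fun u hu =>
    ⟨lt_trans (tp_pos (n+1)) hu.1, lt_of_lt_of_le hu.2 (tp_le_one n)⟩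
  rw [m01, Measure.restrict_apply' measurableSet_Ioo,
    inter_eq_self_of_subset_left hsub, In, Real.volume_Ioo]
  congr 1
  have h : (2:ℝ)^(n+1) = 2 * 2^n := by ring
  rw [h]
  field_simp
  ring

include hx in
lemma sum_an_lt_top : ∑' n : ℕ, ENNReal.ofReal (an x n) * ENNReal.ofReal (((2:ℝ)^n)⁻¹) ≠ ∞ := by
  have key : ∀ n : ℕ, ENNReal.ofReal (an x n) * ENNReal.ofReal (((2:ℝ)^(n+2))⁻¹)
      ≤ ∫⁻ a in In (n+1), ENNReal.ofReal (rearr x a) ∂m01 := by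
    intro n
    have h1 : ∫⁻ a in In (n+1), ENNReal.ofReal (an x n) ∂m01
        = ENNReal.ofReal (an x n) * ENNReal.ofReal (((2:ℝ)^(n+2))⁻¹) := by
      rw [lintegral_const, Measure.restrict_apply_univ, m01_In]
    rw [← h1]
    apply lintegral_mono_ae
    filter_upwards [ae_restrict_mem (In_measurable (n+1))] with a ha
    apply ENNReal.ofReal_le_ofReal
    rw [an]
    apply rearr_antitoneOn x hx
    · exact mem_Ioi.2 (lt_trans (tp_pos (n+2)) ha.1)
    · exact mem_Ioi.2 (tp_pos (n+1))
    · exact le_of_lt (lt_of_lt_of_le ha.2 (le_refl _))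
  have key2 : ∑' n : ℕ, ∫⁻ a in In (n+1), ENNReal.ofReal (rearr x a) ∂m01
      ≤ ∫⁻ u, ‖x u‖₊ ∂m01 := by
    rw [← lintegral_iUnion (fun n => In_measurable (n+1)) In_disjoint]
    exact le_trans (setLIntegral_le_lintegral _ _) (lintegral_rearr_le x hx)
  have key3 : ∀ n : ℕ, ENNReal.ofReal (an x n) * ENNReal.ofReal (((2:ℝ)^n)⁻¹)
      = 4 * (ENNReal.ofReal (an x n) * ENNReal.ofReal (((2:ℝ)^(n+2))⁻¹)) := by
    intro n
    have h4 : ((2:ℝ)^n)⁻¹ = 4 * ((2:ℝ)^(n+2))⁻¹ := by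
      have : (2:ℝ)^(n+2) = 4 * 2^n := by ring
      rw [this]
      field_simp
    rw [h4, ENNReal.ofReal_mul (by norm_num)]
    push_cast
    ring_nf
    rw [ENNReal.ofReal_ofNat]
    ring
  have main : ∑' n : ℕ, ENNReal.ofReal (an x n) * ENNReal.ofReal (((2:ℝ)^n)⁻¹)
      ≤ 4 * ∫⁻ u, ‖x u‖₊ ∂m01 := by
    calc ∑' n : ℕ, ENNReal.ofReal (an x n) * ENNReal.ofReal (((2:ℝ)^n)⁻¹)
        = ∑' n : ℕ, 4 * (ENNReal.ofReal (an x n) * ENNReal.ofReal (((2:ℝ)^(n+2))⁻¹)) := by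
          exact tsum_congr key3
      _ = 4 * ∑' n : ℕ, ENNReal.ofReal (an x n) * ENNReal.ofReal (((2:ℝ)^(n+2))⁻¹) :=
          ENNReal.tsum_mul_left
      _ ≤ 4 * ∑' n : ℕ, ∫⁻ a in In (n+1), ENNReal.ofReal (rearr x a) ∂m01 := by
          exact mul_le_mul_right (ENNReal.tsum_le_tsum key) _
      _ ≤ 4 * ∫⁻ u, ‖x u‖₊ ∂m01 := mul_le_mul_right key2 _
  exact ne_top_of_le_ne_top (ENNReal.mul_ne_top (by norm_num) hx.2.ne) main

include hx in
lemma sum_lintegral_Fn_lt_top : ∑' n : ℕ, ∫⁻ u, ‖Fn x n u‖₊ ∂m01 ≠ ∞ := by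
  refine ne_top_of_le_ne_top (sum_an_lt_top x hx) (ENNReal.tsum_le_tsum (fun n => lintegral_Fn_le x n))

lemma Fn_integrable (n : ℕ) : Integrable (Fn x n) m01 := by
  refine ⟨(Fn_measurable x n).aestronglyMeasurable, ?_⟩
  rw [HasFiniteIntegral]
  exact lt_of_le_of_lt (lintegral_Fn_le x n) (by
    exact ENNReal.mul_lt_top ENNReal.ofReal_lt_top ENNReal.ofReal_lt_top)

lemma f1_nnnorm_le (u : ℝ) : (‖f1 x u‖₊ : ℝ≥0∞) ≤ ∑' n : ℕ, (‖Fn x n u‖₊ : ℝ≥0∞) := by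
  obtain ⟨N, hN⟩ := Fn_event_zero x u
  rw [f1_eq_sum x hN]
  calc (‖∑ n ∈ Finset.range N, Fn x n u‖₊ : ℝ≥0∞)
      ≤ ∑ n ∈ Finset.range N, (‖Fn x n u‖₊ : ℝ≥0∞) := by
        rw [← ENNReal.coe_finset_sum]
        exact_mod_cast nnnorm_sum_le _ _
    _ ≤ ∑' n : ℕ, (‖Fn x n u‖₊ : ℝ≥0∞) := ENNReal.sum_le_tsum _

include hx in
lemma f1_integrable : Integrable (f1 x) m01 := by
  refine ⟨(f1_measurable x).aestronglyMeasurable, ?_⟩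
  rw [HasFiniteIntegral]
  calc ∫⁻ u, ‖f1 x u‖₊ ∂m01 ≤ ∫⁻ u, ∑' n : ℕ, (‖Fn x n u‖₊ : ℝ≥0∞) ∂m01 :=
        lintegral_mono (f1_nnnorm_le x)
    _ = ∑' n : ℕ, ∫⁻ u, ‖Fn x n u‖₊ ∂m01 :=
        lintegral_tsum (fun n => (Fn_measurable x n).nnnorm.coe_nnreal_ennreal.aemeasurable)
    _ < ∞ := lt_of_le_of_lt (le_of_eq rfl) (lt_of_le_of_ne le_top (sum_lintegral_Fn_lt_top x hx))

include hx in
lemma setIntegral_f1 (s : Set ℝ) :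
    ∫ u in s, f1 x u ∂m01 = ∑' n : ℕ, ∫ u in s, Fn x n u ∂m01 := by
  rw [show (fun u => f1 x u) = fun u => ∑' n, Fn x n u from rfl]
  apply integral_tsum
  · exact fun n => (Fn_measurable x n).aestronglyMeasurable
  · refine ne_top_of_le_ne_top (sum_lintegral_Fn_lt_top x hx) (ENNReal.tsum_le_tsum (fun n => ?_))
    exact setLIntegral_le_lintegral _ _

end integrability
/-! ### set integrals over dyadic generators -/

section genint

variable (x : ℝ → ℝ) (hx : Integrable x m01)

def gens (m : ℕ) : Set (Set ℝ) :=
  {A | ∃ j : ℕ, 1 ≤ j ∧ j ≤ 2^m ∧ A = Ioo ((j-1 : ℝ)/2^m) ((j:ℝ)/2^m)}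

lemma dyadicSA_eq (m : ℕ) : dyadicSA m = MeasurableSpace.generateFrom (gens m) := rfl

def gm (m : ℕ) : ℝ → ℝ := fun u => ∑ n ∈ Finset.range m, Fn x n u

lemma m01_Jn_eq (n : ℕ) : m01 (Jn (n+1)) = ENNReal.ofReal (((2:ℝ)^(n+1))⁻¹) := by
  have hsub : Jn (n+1) ⊆ Ioo (0:ℝ) 1 := fun u hu => ⟨hu.1, lt_of_lt_of_le hu.2 (tp_le_one (n+1))⟩
  rw [m01, Measure.restrict_apply' measurableSet_Ioo,
    inter_eq_self_of_subset_left hsub, Jn, Real.volume_Ioo, sub_zero]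

lemma indicator_Jn_integrable (n : ℕ) : Integrable (indicator (Jn n) (1 : ℝ → ℝ)) m01 :=
  (integrable_const (1:ℝ)).indicator measurableSet_Ioo

lemma indicator_In_integrable (n : ℕ) : Integrable (indicator (In n) (1 : ℝ → ℝ)) m01 :=
  (integrable_const (1:ℝ)).indicator measurableSet_Ioo

lemma integral_haar_total (n : ℕ) : ∫ u, haarH n u ∂m01 = 0 := by
  rw [show haarH n = fun u => indicator (Jn (n+1)) 1 u - indicator (In n) 1 u from rfl]
  rw [integral_sub (indicator_Jn_integrable (n+1)) (indicator_In_integrable n)]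
  rw [integral_indicator (show MeasurableSet (Jn (n+1)) from measurableSet_Ioo),
    integral_indicator (show MeasurableSet (In n) from measurableSet_Ioo)]
  simp only [Pi.one_apply]
  rw [setIntegral_const, setIntegral_const, measureReal_def, measureReal_def, m01_Jn_eq n, m01_In n]
  simp

lemma integral_Fn_total (n : ℕ) : ∫ u, Fn x n u ∂m01 = 0 := by
  rw [show Fn x n = fun u => ((-1:ℝ)^(n+1) * an x n) * haarH n u from rfl]
  rw [integral_const_mul, integral_haar_total, mul_zero]

include hx in
lemma integral_f1_total : ∫ u, f1 x u ∂m01 = 0 := by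
  have h := setIntegral_f1 x hx univ
  rw [setIntegral_univ] at h
  rw [h]
  have : ∀ n : ℕ, ∫ u in univ, Fn x n u ∂m01 = 0 := by
    intro n
    rw [setIntegral_univ]
    exact integral_Fn_total x n
  rw [tsum_congr this, tsum_zero]

lemma integral_gm_total (m : ℕ) : ∫ u, gm x m u ∂m01 = 0 := by
  simp only [gm]
  rw [integral_finset_sum _ (fun n _ => Fn_integrable x n)]
  exact Finset.sum_eq_zero (fun n _ => integral_Fn_total x n)

/-- vanishing of high-frequency haar integrals on generators -/
lemma integral_Fn_gen {m n j : ℕ} (hj : 1 ≤ j) (hnm : m ≤ n) :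
    ∫ u in Ioo ((j-1 : ℝ)/2^m) ((j:ℝ)/2^m), Fn x n u ∂m01 = 0 := by
  rcases eq_or_lt_of_le hj with hj1 | hj2
  · -- j = 1 : the generator is Ioo 0 (2^m)⁻¹ and contains the support of haarH n
    subst hj1
    rw [show (((1:ℕ):ℝ) - 1)/2^m = 0 by norm_num, show ((1:ℕ):ℝ)/2^m = ((2:ℝ)^m)⁻¹ by norm_num]
    rw [show Fn x n = fun u => ((-1:ℝ)^(n+1) * an x n) * haarH n u from rfl]
    rw [integral_const_mul]
    have hJ : Jn (n+1) ⊆ Ioo (0:ℝ) (((2:ℝ)^m)⁻¹) :=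
      fun u hu => ⟨hu.1, lt_of_lt_of_le hu.2 (tp_anti (by omega))⟩
    have hI : In n ⊆ Ioo (0:ℝ) (((2:ℝ)^m)⁻¹) :=
      fun u hu => ⟨lt_trans (tp_pos (n+1)) hu.1, lt_of_lt_of_le hu.2 (tp_anti hnm)⟩
    have hz : ∫ u in Ioo (0:ℝ) (((2:ℝ)^m)⁻¹), haarH n u ∂m01 = 0 := by
      rw [show haarH n = fun u => indicator (Jn (n+1)) 1 u - indicator (In n) 1 u from rfl]
      rw [integral_sub ((indicator_Jn_integrable (n+1)).integrableOn)
        ((indicator_In_integrable n).integrableOn)]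
      rw [setIntegral_indicator (show MeasurableSet (Jn (n+1)) from measurableSet_Ioo),
        setIntegral_indicator (show MeasurableSet (In n) from measurableSet_Ioo)]
      rw [inter_eq_self_of_subset_right hJ, inter_eq_self_of_subset_right hI]
      simp only [Pi.one_apply]
      rw [setIntegral_const, setIntegral_const, measureReal_def, measureReal_def, m01_Jn_eq n, m01_In n]
      simp
    rw [hz, mul_zero]
  · -- j ≥ 2 : the generator is to the right of the support of haarH n
    apply setIntegral_eq_zero_of_forall_eq_zero
    rintro u ⟨hu1, -⟩
    have h2j : (2:ℕ) ≤ j := hj2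
    have h1le : (1:ℝ) ≤ (j:ℝ) - 1 := by
      have : ((2:ℕ):ℝ) ≤ (j:ℝ) := by exact_mod_cast h2j
      push_cast at this ⊢
      linarith
    have hbig : ((2:ℝ)^n)⁻¹ ≤ u := by
      have hstep : ((2:ℝ)^m)⁻¹ ≤ ((j:ℝ)-1)/2^m := by
        rw [inv_eq_one_div]
        gcongr
      exact le_trans (le_trans (tp_anti hnm) hstep) (le_of_lt hu1)
    rw [Fn, haar_zero_of_le hbig, mul_zero]

include hx in
lemma integral_f1_gen {m j : ℕ} (hj : 1 ≤ j) :
    ∫ u in Ioo ((j-1 : ℝ)/2^m) ((j:ℝ)/2^m), f1 x u ∂m01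
      = ∫ u in Ioo ((j-1 : ℝ)/2^m) ((j:ℝ)/2^m), gm x m u ∂m01 := by
  rw [setIntegral_f1 x hx]
  simp only [gm]
  rw [integral_finset_sum _ (fun n _ => (Fn_integrable x n).integrableOn)]
  exact tsum_eq_sum (fun n hn => integral_Fn_gen x hj (by simpa using hn))

lemma gens_pi : IsPiSystem (gens m) := by
  rintro A ⟨j, hj1, hj2, rfl⟩ B ⟨j', hj1', hj2', rfl⟩ hne
  obtain ⟨u, ⟨ha1, ha2⟩, ⟨hb1, hb2⟩⟩ := hne
  have hpow : (0:ℝ) < 2^m := by positivity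
  have hjj' : j = j' := by
    have k1 : ((j':ℝ) - 1) < u * 2^m := by
      have := (div_lt_iff₀ hpow).mp hb1
      linarith
    have k2 : u * 2^m < (j:ℝ) := by
      have := (lt_div_iff₀ hpow).mp ha2
      linarith
    have k3 : ((j:ℝ) - 1) < u * 2^m := by
      have := (div_lt_iff₀ hpow).mp ha1
      linarith
    have k4 : u * 2^m < (j':ℝ) := by
      have := (lt_div_iff₀ hpow).mp hb2
      linarith
    have h1' : j' < j + 1 := by exact_mod_cast (by push_cast; linarith : (j':ℝ) < (j:ℝ) + 1)
    have h2' : j < j' + 1 := by exact_mod_cast (by push_cast; linarith : (j:ℝ) < (j':ℝ) + 1)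
    omega
  subst hjj'
  rw [inter_self]
  exact ⟨j, hj1, hj2, rfl⟩

lemma dyadicSA_le (m : ℕ) : dyadicSA m ≤ (inferInstance : MeasurableSpace ℝ) := by
  rw [dyadicSA_eq]
  apply MeasurableSpace.generateFrom_le
  rintro A ⟨j, -, -, rfl⟩
  exact measurableSet_Ioo

end genint
/-! ### measurability of gm with respect to the dyadic sigma algebra, and the condexp identity -/

section condexpsec

variable (x : ℝ → ℝ) (hx : Integrable x m01)

def JU (m n : ℕ) : Set ℝ := ⋃ j ∈ Finset.Icc (1:ℕ) (2^(m-n-1)), Ioo ((j-1 : ℝ)/2^m) ((j:ℝ)/2^m)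

def IU (m n : ℕ) : Set ℝ := ⋃ j ∈ Finset.Icc (2^(m-n-1)+1 : ℕ) (2^(m-n)), Ioo ((j-1 : ℝ)/2^m) ((j:ℝ)/2^m)

lemma pow_cast_div₁ {m n : ℕ} (h : n < m) :
    ((2^(m-n-1) : ℕ) : ℝ)/2^m = ((2:ℝ)^(n+1))⁻¹ := by
  have e : (m-n-1)+(n+1) = m := by omega
  push_cast
  rw [div_eq_iff (by positivity : ((2:ℝ)^m) ≠ 0)]
  rw [inv_mul_eq_div, eq_div_iff (by positivity : ((2:ℝ)^(n+1)) ≠ 0)]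
  rw [← pow_add, e]

lemma pow_cast_div₂ {m n : ℕ} (h : n < m) :
    ((2^(m-n) : ℕ) : ℝ)/2^m = ((2:ℝ)^n)⁻¹ := by
  have e : (m-n)+n = m := by omega
  push_cast
  rw [div_eq_iff (by positivity : ((2:ℝ)^m) ≠ 0)]
  rw [inv_mul_eq_div, eq_div_iff (by positivity : ((2:ℝ)^n) ≠ 0)]
  rw [← pow_add, e]

lemma JU_measurable {m n : ℕ} (h : n < m) : MeasurableSet[dyadicSA m] (JU m n) := by
  simp only [JU]
  apply Finset.measurableSet_biUnion
  intro j hj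
  simp only [Finset.mem_Icc] at hj
  apply MeasurableSpace.measurableSet_generateFrom
  exact ⟨j, hj.1, le_trans hj.2 (Nat.pow_le_pow_right (by norm_num) (by omega)), rfl⟩

lemma IU_measurable {m n : ℕ} (h : n < m) : MeasurableSet[dyadicSA m] (IU m n) := by
  simp only [IU]
  apply Finset.measurableSet_biUnion
  intro j hj
  simp only [Finset.mem_Icc] at hj
  apply MeasurableSpace.measurableSet_generateFrom
  have h1 : 1 ≤ 2^(m-n-1) := Nat.one_le_two_pow
  refine ⟨j, by omega, le_trans hj.2 (Nat.pow_le_pow_right (by norm_num) (by omega)), rfl⟩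

lemma JU_iff {m n : ℕ} (h : n < m) {u : ℝ} (hu : ∀ j : ℕ, u ≠ (j:ℝ)/2^m) :
    u ∈ JU m n ↔ u ∈ Jn (n+1) := by
  have hpow : (0:ℝ) < 2^m := by positivity
  constructor
  · intro hmem
    simp only [JU, mem_iUnion, Finset.mem_Icc, exists_prop] at hmem
    obtain ⟨j, ⟨hj1, hj2⟩, hu1, hu2⟩ := hmem
    constructor
    · have : (1:ℝ) ≤ (j:ℝ) := by exact_mod_cast hj1
      have h0 : (0:ℝ) ≤ ((j:ℝ)-1)/2^m := div_nonneg (by linarith) (le_of_lt hpow)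
      linarith
    · have hcast : (j:ℝ) ≤ ((2^(m-n-1) : ℕ) : ℝ) := by exact_mod_cast hj2
      calc u < (j:ℝ)/2^m := hu2
        _ ≤ ((2^(m-n-1) : ℕ) : ℝ)/2^m := by gcongr
        _ = ((2:ℝ)^(n+1))⁻¹ := pow_cast_div₁ h
  · rintro ⟨h0, h2⟩
    set j := ⌈u * 2^m⌉₊ with hj
    have hj1 : 1 ≤ j := Nat.one_le_ceil_iff.2 (by positivity)
    have hj2 : j ≤ 2^(m-n-1) := by
      apply Nat.ceil_le.2
      have : u < ((2^(m-n-1) : ℕ) : ℝ)/2^m := by rw [pow_cast_div₁ h]; exact h2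
      have := (lt_div_iff₀ hpow).mp this
      linarith
    simp only [JU, mem_iUnion, Finset.mem_Icc, exists_prop]
    refine ⟨j, ⟨hj1, hj2⟩, ?_, ?_⟩
    · have h' : (j - 1 : ℕ) < ⌈u * 2^m⌉₊ := by rw [← hj]; omega
      have hlow := Nat.lt_ceil.mp h'
      rw [Nat.cast_sub (by omega)] at hlow
      push_cast at hlow
      rw [div_lt_iff₀ hpow]
      linarith
    · have hup : u * 2^m ≤ (j:ℝ) := Nat.le_ceil _
      have hne : u * 2^m ≠ (j:ℝ) := by
        intro hcon
        exact hu j (by rw [eq_div_iff (ne_of_gt hpow)]; exact hcon)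
      rw [lt_div_iff₀ hpow]
      exact lt_of_le_of_ne hup hne

lemma IU_iff {m n : ℕ} (h : n < m) {u : ℝ} (hu : ∀ j : ℕ, u ≠ (j:ℝ)/2^m) :
    u ∈ IU m n ↔ u ∈ In n := by
  have hpow : (0:ℝ) < 2^m := by positivity
  constructor
  · intro hmem
    simp only [IU, mem_iUnion, Finset.mem_Icc, exists_prop] at hmem
    obtain ⟨j, ⟨hj1, hj2⟩, hu1, hu2⟩ := hmem
    constructor
    · have hcast : ((2^(m-n-1) : ℕ) : ℝ) ≤ (j:ℝ) - 1 := by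
        have : ((2^(m-n-1)+1 : ℕ) : ℝ) ≤ (j:ℝ) := by exact_mod_cast hj1
        push_cast at this ⊢
        linarith
      calc ((2:ℝ)^(n+1))⁻¹ = ((2^(m-n-1) : ℕ) : ℝ)/2^m := (pow_cast_div₁ h).symm
        _ ≤ ((j:ℝ)-1)/2^m := by gcongr
        _ < u := hu1
    · have hcast : (j:ℝ) ≤ ((2^(m-n) : ℕ) : ℝ) := by exact_mod_cast hj2
      calc u < (j:ℝ)/2^m := hu2
        _ ≤ ((2^(m-n) : ℕ) : ℝ)/2^m := by gcongr
        _ = ((2:ℝ)^n)⁻¹ := pow_cast_div₂ h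
  · rintro ⟨h1, h2⟩
    set j := ⌈u * 2^m⌉₊ with hj
    have hone : 1 ≤ 2^(m-n-1) := Nat.one_le_two_pow
    have h0 : (0:ℝ) < u := lt_trans (tp_pos (n+1)) h1
    have hj1 : 2^(m-n-1)+1 ≤ j := by
      have : ((2^(m-n-1) : ℕ) : ℝ) < u * 2^m := by
        have : ((2^(m-n-1) : ℕ) : ℝ)/2^m < u := by rw [pow_cast_div₁ h]; exact h1
        have := (div_lt_iff₀ hpow).mp this
        linarith
      have h'' := Nat.lt_ceil.mpr this
      rw [← hj] at h''
      omega
    have hj2 : j ≤ 2^(m-n) := by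
      apply Nat.ceil_le.2
      have : u < ((2^(m-n) : ℕ) : ℝ)/2^m := by rw [pow_cast_div₂ h]; exact h2
      have := (lt_div_iff₀ hpow).mp this
      linarith
    simp only [IU, mem_iUnion, Finset.mem_Icc, exists_prop]
    refine ⟨j, ⟨hj1, hj2⟩, ?_, ?_⟩
    · have h' : (j - 1 : ℕ) < ⌈u * 2^m⌉₊ := by rw [← hj]; omega
      have hlow := Nat.lt_ceil.mp h'
      rw [Nat.cast_sub (by omega)] at hlow
      push_cast at hlow
      rw [div_lt_iff₀ hpow]
      linarith
    · have hup : u * 2^m ≤ (j:ℝ) := Nat.le_ceil _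
      have hne : u * 2^m ≠ (j:ℝ) := by
        intro hcon
        exact hu j (by rw [eq_div_iff (ne_of_gt hpow)]; exact hcon)
      rw [lt_div_iff₀ hpow]
      exact lt_of_le_of_ne hup hne

lemma Dm_ae (m : ℕ) : ∀ᵐ u ∂m01, ∀ j : ℕ, u ≠ (j:ℝ)/2^m := by
  have hnull : m01 (Set.range (fun j : ℕ => (j:ℝ)/2^m)) = 0 := by
    apply le_antisymm _ (by simp)
    calc m01 (Set.range (fun j : ℕ => (j:ℝ)/2^m))
        = volume ((Set.range (fun j : ℕ => (j:ℝ)/2^m)) ∩ Ioo 0 1) := by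
          rw [m01, Measure.restrict_apply' measurableSet_Ioo]
      _ ≤ volume (Set.range (fun j : ℕ => (j:ℝ)/2^m)) := measure_mono inter_subset_left
      _ = 0 := (Set.countable_range _).measure_zero volume
  have := measure_eq_zero_iff_ae_notMem.mp hnull
  filter_upwards [this] with u hu j hj
  exact hu ⟨j, hj.symm⟩

lemma gm_integrable (m : ℕ) : Integrable (gm x m) m01 := by
  apply integrable_finset_sum
  exact fun n _ => Fn_integrable x n

lemma gm_aemeas (m : ℕ) : AEStronglyMeasurable[dyadicSA m] (gm x m) m01 := by
  refine ⟨fun u => ∑ n ∈ Finset.range m,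
    (-1:ℝ)^(n+1) * an x n * (indicator (JU m n) 1 u - indicator (IU m n) 1 u), ?_, ?_⟩
  · apply Finset.stronglyMeasurable_fun_sum
    intro n hn
    simp only [Finset.mem_range] at hn
    apply StronglyMeasurable.const_mul
    apply StronglyMeasurable.sub
    · exact stronglyMeasurable_const.indicator (JU_measurable hn)
    · exact stronglyMeasurable_const.indicator (IU_measurable hn)
  · filter_upwards [Dm_ae m] with u hu
    apply Finset.sum_congr rfl
    intro n hn
    simp only [Finset.mem_range] at hn
    have hJ : indicator (JU m n) (1:ℝ→ℝ) u = indicator (Jn (n+1)) 1 u := by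
      by_cases hmem : u ∈ Jn (n+1)
      · rw [indicator_of_mem hmem, indicator_of_mem ((JU_iff hn hu).mpr hmem)]
      · rw [indicator_of_notMem hmem,
          indicator_of_notMem (fun hc => hmem ((JU_iff hn hu).mp hc))]
    have hI : indicator (IU m n) (1:ℝ→ℝ) u = indicator (In n) 1 u := by
      by_cases hmem : u ∈ In n
      · rw [indicator_of_mem hmem, indicator_of_mem ((IU_iff hn hu).mpr hmem)]
      · rw [indicator_of_notMem hmem,
          indicator_of_notMem (fun hc => hmem ((IU_iff hn hu).mp hc))]
    simp only [Fn, haarH, hJ, hI]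

include hx in
lemma condE_eq (m : ℕ) : condE m (f1 x) =ᵐ[m01] gm x m := by
  have hm := dyadicSA_le m
  haveI : SigmaFinite (m01.trim hm) := inferInstance
  have key : ∀ s : Set ℝ, MeasurableSet[dyadicSA m] s →
      ∫ u in s, gm x m u ∂m01 = ∫ u in s, f1 x u ∂m01 := by
    intro s hs
    refine @MeasurableSpace.induction_on_inter ℝ (dyadicSA m)
      (fun s _ => ∫ u in s, gm x m u ∂m01 = ∫ u in s, f1 x u ∂m01) (gens m)
      (dyadicSA_eq m) gens_pi ?_ ?_ ?_ ?_ s hs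
    · simp
    · rintro A ⟨j, hj1, hj2, rfl⟩
      exact (integral_f1_gen x hx hj1).symm
    · intro t ht hC
      have hmt : MeasurableSet t := hm t ht
      have h1 := integral_add_compl hmt (gm_integrable x m)
      have h2 := integral_add_compl hmt (f1_integrable x hx)
      rw [integral_gm_total x m] at h1
      rw [integral_f1_total x hx] at h2
      linarith
    · intro f hdisj hmeas hC
      rw [integral_iUnion (fun i => hm _ (hmeas i)) hdisj (gm_integrable x m).integrableOn,
        integral_iUnion (fun i => hm _ (hmeas i)) hdisj (f1_integrable x hx).integrableOn]
      exact tsum_congr hC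
  exact (ae_eq_condExp_of_forall_setIntegral_eq hm (f1_integrable x hx)
    (fun s _ _ => (gm_integrable x m).integrableOn)
    (fun s hs _ => key s hs) (gm_aemeas x m)).symm

end condexpsec
/-! ### pointwise value of the martingale transform -/

section tmartval

variable (x : ℝ → ℝ)

lemma sum_even_aux (b : ℕ → ℝ) (j : ℕ) :
    ∑ m ∈ Finset.range (2*j+1), (if Even m ∧ 1 ≤ m then b (m-1) else 0)
      = ∑ i ∈ Finset.range j, b (2*i+1) := by
  induction j with
  | zero => simp
  | succ j ih =>
    rw [show 2*(j+1)+1 = ((2*j+1)+1)+1 by ring]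
    rw [Finset.sum_range_succ, Finset.sum_range_succ, ih, Finset.sum_range_succ]
    have h1 : ¬ (Even (2*j+1) ∧ 1 ≤ 2*j+1) := by
      rintro ⟨hc, -⟩; rw [Nat.even_iff] at hc; omega
    have h2 : Even ((2*j+1)+1) ∧ 1 ≤ (2*j+1)+1 := by
      constructor
      · rw [Nat.even_iff]; omega
      · omega
    rw [if_neg h1, if_pos h2]
    have h3 : (2*j+1)+1-1 = 2*j+1 := by omega
    rw [h3]
    ring

lemma Tmart_f1_eq {t : ℝ} (hcond : ∀ m : ℕ, condE m (f1 x) t = gm x m t)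
    {j : ℕ} (htj : t ∈ In (2*j)) :
    Tmart (f1 x) t = ∑ i ∈ Finset.range j, an x (2*i+1) := by
  have hterm : ∀ m : ℕ, (if Even m then condE m (f1 x) t - condEprev m (f1 x) t else 0)
      = if Even m ∧ 1 ≤ m then Fn x (m-1) t else 0 := by
    intro m
    rcases Nat.even_or_odd m with he | ho
    · rw [if_pos he]
      rcases Nat.eq_zero_or_pos m with h0 | h1
      · subst h0
        rw [condEprev, if_pos rfl, hcond 0]
        simp [gm]
      · rw [condEprev, if_neg (by omega), hcond m, hcond (m-1)]
        have hm1 : m - 1 + 1 = m := by omega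
        have hdiff : gm x m t - gm x (m-1) t = Fn x (m-1) t := by
          simp only [gm]
          rw [← hm1, Finset.sum_range_succ]
          simp [hm1]
        rw [hdiff, if_pos ⟨he, h1⟩]
    · rw [if_neg (by simpa [Nat.not_even_iff_odd] using ho),
        if_neg (fun hc => (Nat.not_even_iff_odd.mpr ho) hc.1)]
  rw [Tmart, tsum_congr hterm]
  rw [tsum_eq_sum (s := Finset.range (2*j+1)) ?_]
  · refine Eq.trans (Finset.sum_congr rfl ?_) (sum_even_aux (an x) j)
    intro m hm
    simp only [Finset.mem_range] at hm
    by_cases hc : Even m ∧ 1 ≤ m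
    · rw [if_pos hc, if_pos hc, Fn, haar_on_In htj, if_pos (by omega), mul_one]
      have hm1 : m - 1 + 1 = m := by omega
      rw [hm1, Even.neg_one_pow hc.1, one_mul]
    · rw [if_neg hc, if_neg hc]
  · intro m hm
    simp only [Finset.mem_range, not_lt] at hm
    by_cases hc : Even m ∧ 1 ≤ m
    · rw [if_pos hc, Fn, haar_on_In htj]
      have hpar : m % 2 = 0 := Nat.even_iff.mp hc.1
      rw [if_neg (by omega), if_neg (by omega), mul_zero]
    · rw [if_neg hc]

end tmartval
/-! ### bounds on the dual Hardy operator -/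

section hardybound

variable (x : ℝ → ℝ) (hx : Integrable x m01)

include hx in
lemma rearr_div_integrableOn {c b : ℝ} (hc : 0 < c) (hb : b ≤ 1) :
    IntegrableOn (fun s => rearr x s / s) (Ioo c b) volume := by
  have hmono : AntitoneOn (rearr x) (Ioo c b) :=
    (rearr_antitoneOn x hx).mono (fun a ha => lt_trans hc ha.1)
  have hmeas : AEMeasurable (rearr x) (volume.restrict (Ioo c b)) :=
    aemeasurable_restrict_of_antitoneOn measurableSet_Ioo hmono
  have hsm : AEStronglyMeasurable (fun s => rearr x s / s) (volume.restrict (Ioo c b)) :=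
    (hmeas.div aemeasurable_id).aestronglyMeasurable
  apply Integrable.mono' (integrable_const (rearr x c / c)) hsm
  filter_upwards [ae_restrict_mem measurableSet_Ioo] with s hs
  rw [Real.norm_eq_abs, abs_of_nonneg (div_nonneg (rearr_nonneg x s) (le_of_lt (hc.trans hs.1)))]
  apply div_le_div₀ (rearr_nonneg x c) _ hc (le_of_lt hs.1)
  exact (rearr_antitoneOn x hx) (mem_Ioi.2 hc) (mem_Ioi.2 (hc.trans hs.1)) (le_of_lt hs.1)

lemma integrableOn_const_inv {c b q : ℝ} (hc : 0 < c) :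
    IntegrableOn (fun s : ℝ => q * s⁻¹) (Ioo c b) volume := by
  apply Integrable.mono' (integrable_const (|q| * c⁻¹))
  · exact ((measurable_const.mul measurable_inv).aestronglyMeasurable)
  · filter_upwards [ae_restrict_mem measurableSet_Ioo] with s hs
    rw [Real.norm_eq_abs, abs_mul, abs_inv]
    rw [abs_of_pos (hc.trans hs.1)]
    apply mul_le_mul_of_nonneg_left _ (abs_nonneg q)
    exact inv_anti₀ hc (le_of_lt hs.1)

include hx in
lemma integral_In_bound (k : ℕ) :
    ∫ s in Ioo (((2:ℝ)^(k+1))⁻¹) (((2:ℝ)^k)⁻¹), rearr x s / s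
      ≤ an x k * Real.log 2 := by
  set a := ((2:ℝ)^(k+1))⁻¹
  set b := ((2:ℝ)^k)⁻¹
  have ha : 0 < a := tp_pos (k+1)
  have hb1 : b ≤ 1 := tp_le_one k
  have hab : a < b := by
    have h1 : (2:ℝ)^k < 2^(k+1) := by
      apply pow_lt_pow_right₀ (by norm_num) (by omega)
    exact inv_strictAnti₀ (by positivity) h1
  have step1 : ∫ s in Ioo a b, rearr x s / s ≤ ∫ s in Ioo a b, an x k * s⁻¹ := by
    apply setIntegral_mono_on (rearr_div_integrableOn x hx ha hb1)
      (integrableOn_const_inv ha) measurableSet_Ioo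
    intro s hs
    rw [div_eq_mul_inv]
    apply mul_le_mul_of_nonneg_right _ (inv_nonneg.2 (le_of_lt (ha.trans hs.1)))
    exact (rearr_antitoneOn x hx) (mem_Ioi.2 ha) (mem_Ioi.2 (ha.trans hs.1)) (le_of_lt hs.1)
  have step2 : ∫ s in Ioo a b, an x k * s⁻¹ = an x k * Real.log 2 := by
    rw [MeasureTheory.integral_const_mul]
    congr 1
    rw [← integral_Ioc_eq_integral_Ioo, ← intervalIntegral.integral_of_le (le_of_lt hab)]
    rw [integral_inv (by
      intro hmem
      rcases hmem with ⟨h1, h2⟩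
      rw [min_def] at h1
      split_ifs at h1 <;> linarith)]
    congr 1
    show b / a = 2
    rw [div_eq_iff (ne_of_gt ha)]
    show ((2:ℝ)^k)⁻¹ = 2 * ((2:ℝ)^(k+1))⁻¹
    rw [pow_succ, mul_inv]
    field_simp
  linarith

include hx in
lemma Cstar_pow_bound (k : ℕ) :
    ∫ s in Ioo (((2:ℝ)^k)⁻¹) 1, rearr x s / s
      ≤ (∑ i ∈ Finset.range k, an x i) * Real.log 2 := by
  induction k with
  | zero =>
    simp only [pow_zero, inv_one, Set.Ioo_self, Finset.range_zero, Finset.sum_empty, zero_mul]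
    rw [Measure.restrict_empty, integral_zero_measure]
  | succ k ih =>
    set a := ((2:ℝ)^(k+1))⁻¹
    set b := ((2:ℝ)^k)⁻¹
    have ha : 0 < a := tp_pos (k+1)
    have hb0 : 0 < b := tp_pos k
    have hb1 : b ≤ 1 := tp_le_one k
    have hab : a ≤ b := tp_anti (by omega)
    have hsplit : ∫ s in Ioo a 1, rearr x s / s
        = (∫ s in Ioo a b, rearr x s / s) + ∫ s in Ioo b 1, rearr x s / s := by
      rw [← integral_Ioc_eq_integral_Ioo, ← Set.Ioc_union_Ioc_eq_Ioc hab hb1]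
      rw [setIntegral_union (Set.Ioc_disjoint_Ioc_of_le le_rfl) measurableSet_Ioc]
      · rw [integral_Ioc_eq_integral_Ioo, integral_Ioc_eq_integral_Ioo]
      · rw [IntegrableOn, Measure.restrict_congr_set Ioo_ae_eq_Ioc.symm]
        exact rearr_div_integrableOn x hx ha hb1
      · rw [IntegrableOn, Measure.restrict_congr_set Ioo_ae_eq_Ioc.symm]
        exact rearr_div_integrableOn x hx hb0 le_rfl
    rw [hsplit, Finset.sum_range_succ, add_mul]
    have h1 := integral_In_bound x hx k
    have h2 := ih
    linarith

include hx in
lemma an_pair (i : ℕ) : an x (2*i) ≤ an x (2*i+1) := by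
  have h := (rearr_antitoneOn x hx) (mem_Ioi.2 (tp_pos (2*i+1+1))) (mem_Ioi.2 (tp_pos (2*i+1)))
    (tp_anti (by omega))
  exact h

include hx in
lemma sum_pair (j : ℕ) :
    ∑ i ∈ Finset.range (2*j), an x i ≤ 2 * ∑ i ∈ Finset.range j, an x (2*i+1) := by
  induction j with
  | zero => simp
  | succ j ih =>
    rw [show 2*(j+1) = (2*j+1)+1 by ring, Finset.sum_range_succ, Finset.sum_range_succ,
      Finset.sum_range_succ]
    have hp := an_pair x hx j
    have h1 : (2*j+1) - 1 = 2*j := by omega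
    rw [mul_add]
    have e1 : ∑ i ∈ Finset.range (2*j), an x i + an x (2*j) + an x (2*j+1)
        ≤ 2 * ∑ i ∈ Finset.range j, an x (2*i+1) + 2 * an x (2*j+1) := by
      linarith
    exact e1

end hardybound
/-! ### the main theorem -/

theorem Tf1_dominates_dual_hardy (x : ℝ → ℝ) (hx : Integrable x m01) :
    ∀ᵐ t ∂m01,
      (1/(2*Real.log 2)) * indicator Eset 1 t * dil (1/2) (hardyCstar (rearr x)) t
        ≤ Tmart (fun u => ∑' n : ℕ,
            (-1:ℝ)^(n+1) * rearr x (((2:ℝ)^(n+1))⁻¹) * haarH n u) t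
          * indicator Eset 1 t := by
  have hfeq : (fun u => ∑' n : ℕ,
      (-1:ℝ)^(n+1) * rearr x (((2:ℝ)^(n+1))⁻¹) * haarH n u) = f1 x := rfl
  rw [hfeq]
  have hae : ∀ᵐ t ∂m01, ∀ m : ℕ, condE m (f1 x) t = gm x m t :=
    ae_all_iff.2 (fun m => condE_eq x hx m)
  filter_upwards [hae] with t hcond
  by_cases hE : t ∈ Eset
  · rw [indicator_of_mem hE]
    simp only [Pi.one_apply, mul_one]
    obtain ⟨j, htj⟩ : ∃ j : ℕ, t ∈ In (2*j) := by
      simpa [Eset, mem_iUnion] using hE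
    rw [Tmart_f1_eq x hcond htj]
    set S := ∑ i ∈ Finset.range j, an x (2*i+1) with hS
    have hSnn : 0 ≤ S := Finset.sum_nonneg (fun i _ => an_nonneg x _)
    have hlog : 0 < Real.log 2 := Real.log_pos (by norm_num)
    have htdiv : t / (1/2 : ℝ) = 2 * t := by ring
    have ht1 : ((2:ℝ)^(2*j+1))⁻¹ < t := htj.1
    have ht2' : t < ((2:ℝ)^(2*j))⁻¹ := htj.2
    rcases Nat.eq_zero_or_pos j with hj0 | hj1
    · subst hj0
      have hnot : t / (1/2 : ℝ) ∉ Icc (0:ℝ) 1 := by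
        rw [htdiv]
        intro hc
        have h12 : ((2:ℝ)^(2*0+1))⁻¹ = 1/2 := by norm_num
        rw [h12] at ht1
        have := hc.2
        linarith
      rw [dil, if_neg hnot]
      simp [hS]
    · have hlow : ((2:ℝ)^(2*j))⁻¹ < 2 * t := by
        have he : (2:ℝ) * ((2:ℝ)^(2*j+1))⁻¹ = ((2:ℝ)^(2*j))⁻¹ := by
          rw [pow_succ, mul_inv]
          field_simp
        rw [← he]
        linarith
      have h2t1 : (2:ℝ) * t ≤ 1 := by
        have hle : ((2:ℝ)^(2*j))⁻¹ ≤ ((2:ℝ)^2)⁻¹ := tp_anti (by omega)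
        norm_num at hle
        linarith
      have h2t0 : (0:ℝ) ≤ 2 * t := by
        have := tp_pos (2*j+1); linarith
      have hmem : t / (1/2:ℝ) ∈ Icc (0:ℝ) 1 := by rw [htdiv]; exact ⟨h2t0, h2t1⟩
      rw [dil, if_pos hmem, htdiv]
      have hmono : hardyCstar (rearr x) (2*t) ≤ ∫ s in Ioo (((2:ℝ)^(2*j))⁻¹) 1, rearr x s / s := by
        rw [hardyCstar]
        apply setIntegral_mono_set (rearr_div_integrableOn x hx (tp_pos (2*j)) le_rfl)
        · filter_upwards [ae_restrict_mem measurableSet_Ioo] with s hs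
          exact div_nonneg (rearr_nonneg x s) (le_of_lt (lt_trans (tp_pos (2*j)) hs.1))
        · apply HasSubset.Subset.eventuallyLE
          intro s hs
          exact ⟨lt_trans hlow hs.1, hs.2⟩
      have hbound := Cstar_pow_bound x hx (2*j)
      have hpair := sum_pair x hx j
      calc 1/(2*Real.log 2) * hardyCstar (rearr x) (2*t)
          ≤ 1/(2*Real.log 2) * ((∑ i ∈ Finset.range (2*j), an x i) * Real.log 2) := by
            apply mul_le_mul_of_nonneg_left (le_trans hmono hbound) (by positivity)
        _ ≤ 1/(2*Real.log 2) * ((2*S) * Real.log 2) := by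
            apply mul_le_mul_of_nonneg_left _ (by positivity)
            apply mul_le_mul_of_nonneg_right hpair (le_of_lt hlog)
        _ = S := by field_simp
  · rw [indicator_of_notMem hE]
    simp
end
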